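/- Let x^(1),…,x^(n) ∈ [0,1]^d, 1 ≤ s ≤ d, and for each nonempty S ⊆ [d] with |S| ≤ s let L_S := Π_{j∈S}({0} ∪ {x_j^(i) : i = 1,…,n}) ∖ {0}. Given real numbers β_0 and β_S (1 ≤ |S| ≤ s) and finite Borel measures ν_S on [0,1)^{|S|}∖{0} (1 ≤ |S| ≤ s), let f_{β,ν} ∈ F^{d,s}_TC be the corresponding function. Then there exist real numbers γ_0 and γ_S (1 ≤ |S| ≤ s) and discrete measures μ_S supported on L_S (1 ≤ |S| ≤ s) such that the corresponding function f_{γ,μ} ∈ F^{d,s}_TC satisfies f_{γ,μ}(x^(i)) = f_{β,ν}(x^(i)) for all i = 1,…,n. -/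

import Mathlib

open MeasureTheory ProbabilityTheory

noncomputable section

/-- The unit cube `[0,1]^ι` inside `ι → ℝ`. -/
def unitCube (ι : Type*) : Set (ι → ℝ) := Set.univ.pi fun _ => Set.Icc (0 : ℝ) 1

/-- The (tensor-product) divided difference of `f` of order `p` at the points `x`. -/
def mvDivDiff {ι : Type*} [Fintype ι] [DecidableEq ι] (f : (ι → ℝ) → ℝ) (p : ι → ℕ)
    (x : (k : ι) → Fin (p k + 1) → ℝ) : ℝ :=
  ∑ i : (k : ι) → Fin (p k + 1),
    f (fun k => x k (i k)) /
      ∏ k, ∏ j ∈ Finset.univ.erase (i k), (x k (i k) - x k j)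

/-- `F^d_TCP`: total concavity in the sense of Popoviciu, i.e. all divided differences
of order `p ∈ {0,1,2}^d` with `max_k p_k = 2` are nonpositive. -/
def MemTCP (d : ℕ) (f : (Fin d → ℝ) → ℝ) : Prop :=
  ∀ p : Fin d → ℕ, (∀ k, p k ≤ 2) → (∃ k, p k = 2) →
    ∀ x : (k : Fin d) → Fin (p k + 1) → ℝ,
      (∀ k, StrictMono (x k)) → (∀ k j, x k j ∈ Set.Icc (0 : ℝ) 1) →
      mvDivDiff f p x ≤ 0

/-- The collection of subsets `S ⊆ [d]` with `1 ≤ |S| ≤ s`. -/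
def smallSets (d s : ℕ) : Finset (Finset (Fin d)) :=
  Finset.univ.filter fun S => 1 ≤ S.card ∧ S.card ≤ s

/-- The set `[0,1)^{|S|} \ {0}`, viewed inside `Fin d → ℝ` (coordinates in `S`). -/
def tcSupport (d : ℕ) (S : Finset (Fin d)) : Set (Fin d → ℝ) :=
  {t | (∀ j ∈ S, t j ∈ Set.Ico (0 : ℝ) 1) ∧ ∃ j ∈ S, t j ≠ 0}

/-- A representation `(β₀, (β_S), (ν_S))` of a totally concave function:
a constant, coefficients for the multilinear terms, and finite Borel measures
`ν_S` on `[0,1)^{|S|} \ {0}`. -/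
structure TCRep (d : ℕ) where
  β0 : ℝ
  β : Finset (Fin d) → ℝ
  ν : Finset (Fin d) → Measure (Fin d → ℝ)
  finite : ∀ S, IsFiniteMeasure (ν S)
  support : ∀ S, ν S (tcSupport d S)ᶜ = 0

/-- The function represented by `r`, keeping interactions of order at most `s`. -/
def TCRep.toFun {d : ℕ} (s : ℕ) (r : TCRep d) (x : Fin d → ℝ) : ℝ :=
  r.β0 + ∑ S ∈ smallSets d s, r.β S * ∏ j ∈ S, x j
    - ∑ S ∈ smallSets d s, ∫ t, (∏ j ∈ S, max (x j - t j) 0) ∂(r.ν S)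

/-- The total size `V` of the measures in the representation `r`. -/
def TCRep.V {d : ℕ} (s : ℕ) (r : TCRep d) : ℝ :=
  ∑ S ∈ smallSets d s, (r.ν S Set.univ).toReal

/-- Membership in the class `F^{d,s}_TC` of totally concave functions on `[0,1]^d`
with interactions of order at most `s`. -/
def MemTC (d s : ℕ) (f : (Fin d → ℝ) → ℝ) : Prop :=
  ∃ r : TCRep d, ∀ x ∈ unitCube (Fin d), f x = r.toFun s x

/-- Membership in `F^{d,s}_TC` via a representation of total measure size at most `Vbd`. -/
def MemTCV (d s : ℕ) (Vbd : ℝ) (f : (Fin d → ℝ) → ℝ) : Prop :=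
  ∃ r : TCRep d, (∀ x ∈ unitCube (Fin d), f x = r.toFun s x) ∧ r.V s ≤ Vbd

/-- The interaction restriction condition of order `s`. -/
def InteractionRestriction (d s : ℕ) (f : (Fin d → ℝ) → ℝ) : Prop :=
  ∀ S : Finset (Fin d), s < S.card →
    ∀ x y : Fin d → ℝ, (∀ k ∈ S, 0 ≤ x k ∧ x k < y k ∧ y k ≤ 1) →
      ∑ R ∈ S.powerset, (-1 : ℝ) ^ (S.card - R.card) *
        f (fun k => if k ∈ R then y k else if k ∈ S then x k else 0) = 0

/-- The regularity condition at `0` for the subset `S`: the relevant divided differences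
near the origin are bounded above. -/
def RegZero (d : ℕ) (f : (Fin d → ℝ) → ℝ) (S : Finset (Fin d)) : Prop :=
  ∃ M : ℝ, ∀ t : Fin d → ℝ, (∀ k ∈ S, t k ∈ Set.Ioc (0 : ℝ) 1) →
    (∏ k ∈ S, t k)⁻¹ *
      ∑ R ∈ S.powerset, (-1 : ℝ) ^ (S.card - R.card) *
        f (fun k => if k ∈ R then t k else 0) ≤ M

/-- The regularity condition at `1` for the subset `S`: the relevant divided differences
near the far corner are bounded below. -/
def RegOne (d : ℕ) (f : (Fin d → ℝ) → ℝ) (S : Finset (Fin d)) : Prop :=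
  ∃ M : ℝ, ∀ t : Fin d → ℝ, (∀ k ∈ S, t k ∈ Set.Ico (0 : ℝ) 1) →
    M ≤ (∏ k ∈ S, (1 - t k))⁻¹ *
      ∑ R ∈ S.powerset, (-1 : ℝ) ^ (S.card - R.card) *
        f (fun k => if k ∈ R then 1 else if k ∈ S then t k else 0)

/-- Entire monotonicity: all divided differences of order `p ∈ {0,1}^ι \ {0}`
are nonnegative. -/
def EntirelyMonotone {ι : Type*} [Fintype ι] [DecidableEq ι] (g : (ι → ℝ) → ℝ) : Prop :=
  ∀ p : ι → ℕ, (∀ k, p k ≤ 1) → (∃ k, p k = 1) →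
    ∀ x : (k : ι) → Fin (p k + 1) → ℝ,
      (∀ k, StrictMono (x k)) → (∀ k j, x k j ∈ Set.Icc (0 : ℝ) 1) →
      0 ≤ mvDivDiff g p x

/-- Coordinate-wise right-continuity on the unit cube. -/
def CwRightCont {ι : Type*} [DecidableEq ι] (g : (ι → ℝ) → ℝ) : Prop :=
  ∀ x : ι → ℝ, (∀ k, x k ∈ Set.Icc (0 : ℝ) 1) → ∀ k : ι,
    ContinuousWithinAt (fun u => g (Function.update x k u)) (Set.Icc (x k) 1) (x k)

/-- Coordinate-wise left-continuity at points of the cube whose `k`-th coordinate is `1`,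
with respect to that coordinate. -/
def CwLeftContAtOne {ι : Type*} [DecidableEq ι] (g : (ι → ℝ) → ℝ) : Prop :=
  ∀ x : ι → ℝ, (∀ k, x k ∈ Set.Icc (0 : ℝ) 1) → ∀ k : ι, x k = 1 →
    ContinuousWithinAt (fun u => g (Function.update x k u)) (Set.Icc (0 : ℝ) 1) (x k)

/-- `t` belongs to the lattice `L_S` generated by the design points `x`
(extended by `0` in the coordinates outside `S`). -/
def InLattice {d n : ℕ} (x : Fin n → Fin d → ℝ) (S : Finset (Fin d)) (t : Fin d → ℝ) : Prop :=
  (∀ j ∈ S, t j = 0 ∨ ∃ i, t j = x i j) ∧ (∃ j ∈ S, t j ≠ 0) ∧ ∀ j ∉ S, t j = 0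

/-- The finite-dimensional class of functions built from hinge functions with knots in the
lattices `L_S` (nonnegative coefficients on the hinge terms). -/
def MemDiscrete (d s : ℕ) {n : ℕ} (x : Fin n → Fin d → ℝ) (f : (Fin d → ℝ) → ℝ) : Prop :=
  ∃ (β0 : ℝ) (β : Finset (Fin d) → ℝ)
    (T : Finset (Fin d) → Finset (Fin d → ℝ)) (c : Finset (Fin d) → (Fin d → ℝ) → ℝ),
    (∀ S ∈ smallSets d s, ∀ t ∈ T S, InLattice x S t) ∧
    (∀ S ∈ smallSets d s, ∀ t ∈ T S, 0 ≤ c S t) ∧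
    ∀ z ∈ unitCube (Fin d),
      f z = β0 + ∑ S ∈ smallSets d s, β S * ∏ j ∈ S, z j
        - ∑ S ∈ smallSets d s, ∑ t ∈ T S, c S t * ∏ j ∈ S, max (z j - t j) 0

/-- The point of the equally spaced lattice design indexed by `i`. -/
def latticePoint {d : ℕ} (nk : Fin d → ℕ) (i : ∀ k, Fin (nk k)) : Fin d → ℝ :=
  fun k => (i k : ℝ) / (nk k)

/-- `V_design(f)`: the infimum of `V(g)` over all totally concave `g` agreeing with `f`
at the design points. -/
def Vdesign (d : ℕ) {ι : Type*} (pts : ι → Fin d → ℝ) (f : (Fin d → ℝ) → ℝ) : ℝ :=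
  sInf {v : ℝ | ∃ r : TCRep d, (∀ i, r.toFun d (pts i) = f (pts i)) ∧ v = r.V d}

/-- `f` is a continuous rectangular piecewise multi-affine function (interaction order `≤ s`)
with respect to an axis-aligned grid partition of `[0,1]^d` into `m` rectangles. -/
def IsRectPartition (d s : ℕ) (f : (Fin d → ℝ) → ℝ) (m : ℕ) : Prop :=
  ContinuousOn f (unitCube (Fin d)) ∧
  ∃ (mk : Fin d → ℕ) (u : (k : Fin d) → Fin (mk k + 1) → ℝ),
    (∀ k, StrictMono (u k)) ∧ (∀ k, u k 0 = 0) ∧ (∀ k, u k (Fin.last (mk k)) = 1) ∧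
    m = ∏ k, mk k ∧
    ∀ j : (k : Fin d) → Fin (mk k),
      ∃ (c0 : ℝ) (c : Finset (Fin d) → ℝ),
        ∀ x : Fin d → ℝ,
          (∀ k, x k ∈ Set.Icc (u k (j k).castSucc) (u k (j k).succ)) →
          f x = c0 + ∑ S ∈ smallSets d s, c S * ∏ k ∈ S, x k


section AuxDiscretize

open Finset MeasureTheory

/-- One-dimensional interpolation: any hinge value `max (v - u) 0` for grid values `v`
can be written as a convex combination of hinge values at grid knots. -/
lemma interp1D (G : Finset ℝ) (h0 : (0:ℝ) ∈ G) (u : ℝ) (hu : 0 ≤ u) :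
    ∃ ρ : ℝ → ℝ, (∀ g, 0 ≤ ρ g) ∧ (∑ g ∈ G, ρ g = 1) ∧
      ∀ v ∈ G, ∑ g ∈ G, ρ g * max (v - g) 0 = max (v - u) 0 := by
  classical
  have hA : ((G.filter (· ≤ u)).Nonempty) := ⟨0, by simp [h0, hu]⟩
  set a := (G.filter (· ≤ u)).max' hA with ha_def
  have haG : a ∈ G := (Finset.mem_filter.mp ((G.filter (· ≤ u)).max'_mem hA)).1
  have hau : a ≤ u := (Finset.mem_filter.mp ((G.filter (· ≤ u)).max'_mem hA)).2
  have hva : ∀ v ∈ G, v ≤ u → v ≤ a := fun v hv hvu =>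
    Finset.le_max' (G.filter (· ≤ u)) v (Finset.mem_filter.mpr ⟨hv, hvu⟩)
  by_cases hB : ((G.filter (fun g => u < g)).Nonempty)
  · set b := (G.filter (fun g => u < g)).min' hB with hb_def
    have hbG : b ∈ G := (Finset.mem_filter.mp ((G.filter (fun g => u < g)).min'_mem hB)).1
    have hub : u < b := (Finset.mem_filter.mp ((G.filter (fun g => u < g)).min'_mem hB)).2
    have hvb : ∀ v ∈ G, u < v → b ≤ v := fun v hv hvu =>
      Finset.min'_le (G.filter (fun g => u < g)) v (Finset.mem_filter.mpr ⟨hv, hvu⟩)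
    have hab : a < b := lt_of_le_of_lt hau hub
    have hba : (0:ℝ) < b - a := by linarith
    set lam := (u - a) / (b - a) with hlam_def
    have hlam0 : 0 ≤ lam := div_nonneg (by linarith) (by linarith)
    have hlam1 : lam ≤ 1 := by rw [hlam_def, div_le_one hba]; linarith
    have hne : a ≠ b := ne_of_lt hab
    refine ⟨fun g => (if g = a then 1 - lam else 0) + (if g = b then lam else 0), ?_, ?_, ?_⟩
    · intro g
      dsimp only
      have h1 : (0:ℝ) ≤ (if g = a then 1 - lam else 0) := by split <;> linarith
      have h2 : (0:ℝ) ≤ (if g = b then lam else 0) := by split <;> linarith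
      linarith
    · rw [Finset.sum_add_distrib, Finset.sum_ite_eq' G a, Finset.sum_ite_eq' G b,
        if_pos haG, if_pos hbG]; ring
    · intro v hv
      have key : ∑ g ∈ G,
          ((if g = a then 1 - lam else 0) + (if g = b then lam else 0)) * max (v - g) 0
          = (1 - lam) * max (v - a) 0 + lam * max (v - b) 0 := by
        have hpt : ∀ g ∈ G,
            ((if g = a then 1 - lam else 0) + (if g = b then lam else 0)) * max (v - g) 0
            = (if g = a then (1 - lam) * max (v - a) 0 else 0)
              + (if g = b then lam * max (v - b) 0 else 0) := by
          intro g _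
          rcases eq_or_ne g a with rfl | hga
          · simp [hne]
          · rcases eq_or_ne g b with rfl | hgb
            · simp [Ne.symm hne]
            · simp [hga, hgb]
        rw [Finset.sum_congr rfl hpt, Finset.sum_add_distrib,
          Finset.sum_ite_eq' G a, Finset.sum_ite_eq' G b, if_pos haG, if_pos hbG]
      rw [key]
      rcases le_or_gt v u with hvu | huv
      · have h1 : v ≤ a := hva v hv hvu
        rw [max_eq_right (by linarith : v - a ≤ 0), max_eq_right (by linarith : v - b ≤ 0),
          max_eq_right (by linarith : v - u ≤ 0)]
        ring
      · have h1 : b ≤ v := hvb v hv huv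
        rw [max_eq_left (by linarith : (0:ℝ) ≤ v - a), max_eq_left (by linarith : (0:ℝ) ≤ v - b),
          max_eq_left (by linarith : (0:ℝ) ≤ v - u)]
        have hlam : lam * (b - a) = u - a := div_mul_cancel₀ _ (ne_of_gt hba)
        linear_combination -hlam
  · refine ⟨fun g => if g = a then 1 else 0, fun g => by dsimp only; split <;> norm_num,
      by rw [Finset.sum_ite_eq' G a, if_pos haG], ?_⟩
    intro v hv
    have hvu : v ≤ u := by
      by_contra h
      exact hB ⟨v, Finset.mem_filter.mpr ⟨hv, lt_of_not_ge h⟩⟩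
    have h1 : v ≤ a := hva v hv hvu
    have hpt : ∀ g ∈ G, (if g = a then (1:ℝ) else 0) * max (v - g) 0
        = (if g = a then max (v - a) 0 else 0) := by
      intro g _
      rcases eq_or_ne g a with rfl | hga
      · simp
      · simp [hga]
    rw [Finset.sum_congr rfl hpt, Finset.sum_ite_eq' G a, if_pos haG,
      max_eq_right (by linarith : v - a ≤ 0), max_eq_right (by linarith : v - u ≤ 0)]

/-- The grid of the `j`-th coordinates of the design points, together with `0`. -/
def gridF {d n : ℕ} (x : Fin n → Fin d → ℝ) (j : Fin d) : Finset ℝ :=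
  insert 0 ((Finset.univ : Finset (Fin n)).image fun i => x i j)

/-- The finite lattice generated by the design points (including the origin), as a `Finset`. -/
noncomputable def latticeFinset {d n : ℕ} (x : Fin n → Fin d → ℝ) (S : Finset (Fin d)) :
    Finset (Fin d → ℝ) :=
  Fintype.piFinset fun j => if j ∈ S then gridF x j else {0}

lemma tensor_interp {d n : ℕ} (x : Fin n → Fin d → ℝ) (S : Finset (Fin d))
    (t : Fin d → ℝ) (ht : ∀ j ∈ S, 0 ≤ t j) :
    ∃ q : (Fin d → ℝ) → ℝ,
      (∀ p, 0 ≤ q p) ∧ (∑ p ∈ latticeFinset x S, q p = 1) ∧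
      ∀ i, ∑ p ∈ latticeFinset x S, q p * ∏ j ∈ S, max (x i j - p j) 0
            = ∏ j ∈ S, max (x i j - t j) 0 := by
  classical
  have hρ : ∀ j : Fin d, ∃ ρ : ℝ → ℝ, (∀ g, 0 ≤ ρ g) ∧
      (∑ g ∈ (if j ∈ S then gridF x j else {0}), ρ g = 1) ∧
      (j ∈ S → ∀ v ∈ gridF x j, ∑ g ∈ gridF x j, ρ g * max (v - g) 0 = max (v - t j) 0) := by
    intro j
    by_cases hj : j ∈ S
    · obtain ⟨ρ, h0, h1, h2⟩ := interp1D (gridF x j) (Finset.mem_insert_self _ _) (t j) (ht j hj)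
      exact ⟨ρ, h0, by simpa [hj] using h1, fun _ => h2⟩
    · exact ⟨fun g => if g = 0 then 1 else 0, fun g => by dsimp only; split <;> norm_num,
        by simp [hj], fun h => absurd h hj⟩
  choose ρ hρ0 hρ1 hρ2 using hρ
  refine ⟨fun p => ∏ j, ρ j (p j), fun p => Finset.prod_nonneg fun j _ => hρ0 j (p j), ?_, ?_⟩
  · rw [latticeFinset, ← Finset.prod_univ_sum]
    exact Finset.prod_eq_one fun j _ => hρ1 j
  · intro i
    have hx_mem : ∀ j, x i j ∈ gridF x j := fun j =>
      Finset.mem_insert_of_mem (Finset.mem_image.mpr ⟨i, Finset.mem_univ _, rfl⟩)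
    calc ∑ p ∈ latticeFinset x S, (∏ j, ρ j (p j)) * ∏ j ∈ S, max (x i j - p j) 0
        = ∑ p ∈ latticeFinset x S,
            ∏ j, (ρ j (p j) * (if j ∈ S then max (x i j - p j) 0 else 1)) := by
          refine Finset.sum_congr rfl fun p _ => ?_
          rw [Finset.prod_mul_distrib]
          congr 1
          rw [Finset.prod_ite_mem Finset.univ S fun j => max (x i j - p j) 0,
            Finset.univ_inter]
      _ = ∏ j, ∑ g ∈ (if j ∈ S then gridF x j else {0}),
            ρ j g * (if j ∈ S then max (x i j - g) 0 else 1) := by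
          rw [latticeFinset, Finset.prod_univ_sum]
      _ = ∏ j, (if j ∈ S then max (x i j - t j) 0 else 1) := by
          refine Finset.prod_congr rfl fun j _ => ?_
          by_cases hj : j ∈ S
          · simp only [hj, if_true]
            exact hρ2 j hj (x i j) (hx_mem j)
          · simp only [hj, if_false]
            simpa [hj] using hρ1 j
      _ = ∏ j ∈ S, max (x i j - t j) 0 := by
          rw [Finset.prod_ite_mem Finset.univ S fun j => max (x i j - t j) 0, Finset.univ_inter]

lemma measurableSet_tcSupport (d : ℕ) (S : Finset (Fin d)) :
    MeasurableSet (tcSupport d S) := by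
  have heq : tcSupport d S =
      (⋂ j ∈ S, (fun t : Fin d → ℝ => t j) ⁻¹' Set.Ico (0:ℝ) 1) ∩
        ⋃ j ∈ S, (fun t : Fin d → ℝ => t j) ⁻¹' ({0}ᶜ : Set ℝ) := by
    ext t
    simp [tcSupport, Set.mem_iInter, Set.mem_iUnion]
  rw [heq]
  exact MeasurableSet.inter
    (MeasurableSet.biInter (Set.to_countable _) fun j _ =>
      measurable_pi_apply j measurableSet_Ico)
    (MeasurableSet.biUnion (Set.to_countable _) fun j _ =>
      measurable_pi_apply j (measurableSet_singleton 0).compl)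

lemma key_discretize {d n : ℕ} (x : Fin n → Fin d → ℝ) (hx : ∀ i, x i ∈ unitCube (Fin d))
    (ν : Measure (Fin d → ℝ)) [IsFiniteMeasure ν] (S : Finset (Fin d))
    (hsupp : ν (tcSupport d S)ᶜ = 0) :
    ∃ (T : Finset (Fin d → ℝ)) (cf : (Fin d → ℝ) → ENNReal) (δ : ℝ),
      (∀ t ∈ T, InLattice x S t) ∧ (∀ t ∈ T, t ∈ tcSupport d S) ∧
      (∀ t ∈ T, cf t ≠ ⊤) ∧
      ∀ i, ∫ t, (∏ j ∈ S, max (x i j - t j) 0) ∂(∑ t ∈ T, cf t • Measure.dirac t)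
          = (∫ t, (∏ j ∈ S, max (x i j - t j) 0) ∂ν) - δ * ∏ j ∈ S, x i j := by
  classical
  have hx01 : ∀ i j, x i j ∈ Set.Icc (0:ℝ) 1 := fun i j => by
    have := hx i
    rw [unitCube, Set.mem_univ_pi] at this
    exact this j
  by_cases hc0 : ν Set.univ = 0
  · refine ⟨∅, 0, 0, by simp, by simp, by simp, fun i => ?_⟩
    have hν : ν = 0 := MeasureTheory.Measure.measure_univ_eq_zero.mp hc0
    simp [hν]
  -- main case
  set c : ENNReal := ν Set.univ with hc_def
  have hcT : c ≠ ⊤ := measure_ne_top ν _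
  set μ' : Measure (Fin d → ℝ) := c⁻¹ • ν with hμ'_def
  haveI hprob : IsProbabilityMeasure μ' :=
    ⟨by rw [hμ'_def, Measure.smul_apply, smul_eq_mul, ← hc_def, ENNReal.inv_mul_cancel hc0 hcT]⟩
  set P : Finset (Fin d → ℝ) := latticeFinset x S with hP_def
  set Φ : (Fin d → ℝ) → (Fin n → ℝ) := fun t i => ∏ j ∈ S, max (x i j - t j) 0 with hΦ_def
  have hΦcont : Continuous Φ := by
    refine continuous_pi fun i => ?_
    exact continuous_finset_prod S fun j _ =>
      ((continuous_const.sub (continuous_apply j)).max continuous_const)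
  have hae : ∀ᵐ t ∂μ', t ∈ tcSupport d S := by
    rw [MeasureTheory.ae_iff]
    have hcompl : {t | ¬ t ∈ tcSupport d S} = (tcSupport d S)ᶜ := rfl
    rw [hcompl, hμ'_def, Measure.smul_apply, hsupp, smul_eq_mul, mul_zero]
  have hmem : ∀ t ∈ tcSupport d S, Φ t ∈ convexHull ℝ (Φ '' ↑P) := by
    intro t ht
    obtain ⟨q, hq0, hq1, hq2⟩ := tensor_interp x S t fun j hj => (ht.1 j hj).1
    have hcm : Φ t = P.centerMass q Φ := by
      rw [Finset.centerMass_eq_of_sum_1 _ _ hq1]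
      funext i
      rw [Finset.sum_apply]
      simp only [Pi.smul_apply, smul_eq_mul]
      exact (hq2 i).symm
    rw [hcm]
    exact Finset.centerMass_mem_convexHull P (fun p _ => hq0 p) (by rw [hq1]; norm_num)
      fun p hp => Set.mem_image_of_mem _ (Finset.mem_coe.mpr hp)
  have hInt' : Integrable Φ μ' := by
    refine Integrable.mono' (integrable_const (1:ℝ)) hΦcont.aestronglyMeasurable ?_
    filter_upwards [hae] with t ht
    rw [pi_norm_le_iff_of_nonneg (by norm_num : (0:ℝ) ≤ 1)]
    intro i
    rw [Real.norm_eq_abs, abs_le]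
    constructor
    · have : (0:ℝ) ≤ Φ t i := Finset.prod_nonneg fun j _ => le_max_right _ _
      linarith
    · refine Finset.prod_le_one (fun j _ => le_max_right _ _) fun j hj => ?_
      have h1 : x i j ≤ 1 := (hx01 i j).2
      have h2 : 0 ≤ t j := (ht.1 j hj).1
      exact max_le (by linarith) (by norm_num)
  set v : Fin n → ℝ := ∫ t, Φ t ∂μ' with hv_def
  have hv : v ∈ convexHull ℝ (Φ '' ↑P) :=
    (convex_convexHull ℝ _).integral_mem (((P.finite_toSet.image Φ).isClosed_convexHull ℝ))
      (hae.mono fun t ht => hmem t ht) hInt'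
  have hv' : v ∈ convexHull ℝ (↑(P.image Φ) : Set (Fin n → ℝ)) := by
    rwa [Finset.coe_image]
  rw [Finset.convexHull_eq] at hv'
  obtain ⟨w, hw0, hw1, hwc⟩ := hv'
  have hvsum : v = ∑ y ∈ P.image Φ, w y • y := by
    rw [← hwc, Finset.centerMass_eq_of_sum_1 _ _ hw1]
    simp
  -- choose preimages
  set σ : (Fin n → ℝ) → (Fin d → ℝ) := Function.invFunOn Φ ↑P with hσ_def
  have hσspec : ∀ y ∈ P.image Φ, σ y ∈ P ∧ Φ (σ y) = y := by
    intro y hy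
    obtain ⟨p, hp, hpy⟩ := Finset.mem_image.mp hy
    have hex : ∃ a ∈ (↑P : Set (Fin d → ℝ)), Φ a = y := ⟨p, Finset.mem_coe.mpr hp, hpy⟩
    exact ⟨Finset.mem_coe.mp (Function.invFunOn_mem hex), Function.invFunOn_eq hex⟩
  set T₀ : Finset (Fin d → ℝ) := (P.image Φ).image σ with hT₀_def
  have hT₀P : ∀ p ∈ T₀, p ∈ P := by
    intro p hp
    obtain ⟨y, hy, rfl⟩ := Finset.mem_image.mp hp
    exact (hσspec y hy).1
  have hT₀w : ∀ p ∈ T₀, 0 ≤ w (Φ p) := by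
    intro p hp
    obtain ⟨y, hy, rfl⟩ := Finset.mem_image.mp hp
    rw [(hσspec y hy).2]
    exact hw0 y hy
  have hsum0 : v = ∑ p ∈ T₀, w (Φ p) • Φ p := by
    rw [hT₀_def, Finset.sum_image ?hinj]
    case hinj =>
      intro y hy z hz h
      have h1 := (hσspec y hy).2
      have h2 := (hσspec z hz).2
      rw [← h1, ← h2, h]
    rw [hvsum]
    refine Finset.sum_congr rfl fun y hy => ?_
    rw [(hσspec y hy).2]
  -- facts about points of P
  have hPfacts : ∀ p ∈ P, (∀ j ∈ S, p j ∈ gridF x j) ∧ (∀ j ∉ S, p j = 0) := by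
    intro p hp
    rw [hP_def, latticeFinset, Fintype.mem_piFinset] at hp
    constructor
    · intro j hj; have := hp j; rwa [if_pos hj] at this
    · intro j hj; have := hp j; rw [if_neg hj] at this; exact Finset.mem_singleton.mp this
  have hgrid01 : ∀ j, ∀ g ∈ gridF x j, 0 ≤ g ∧ g ≤ 1 := by
    intro j g hg
    rcases Finset.mem_insert.mp hg with rfl | hg
    · exact ⟨le_refl 0, by norm_num⟩
    · obtain ⟨i, _, rfl⟩ := Finset.mem_image.mp hg
      exact ⟨(hx01 i j).1, (hx01 i j).2⟩
  have hbad : ∀ p ∈ T₀, p ∉ tcSupport d S → p = 0 ∨ Φ p = 0 := by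
    intro p hp hps
    obtain ⟨hpG, hp0⟩ := hPfacts p (hT₀P p hp)
    rw [tcSupport, Set.mem_setOf_eq, not_and_or] at hps
    rcases hps with hps | hps
    · push_neg at hps
      obtain ⟨j, hj, hjp⟩ := hps
      have h01 := hgrid01 j (p j) (hpG j hj)
      have hp1 : p j = 1 := by
        rw [Set.mem_Ico, not_and_or] at hjp
        rcases hjp with h | h
        · exact absurd h01.1 h
        · push_neg at h; linarith [h01.2]
      right
      funext i
      rw [hΦ_def]
      refine Finset.prod_eq_zero hj ?_
      rw [hp1]
      exact max_eq_right (by linarith [(hx01 i j).2])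
    · push_neg at hps
      left
      funext j
      by_cases hj : j ∈ S
      · exact hps j hj
      · exact hp0 j hj
  have h0S : (0 : Fin d → ℝ) ∉ tcSupport d S := by
    rintro ⟨-, j, hj, hne⟩
    exact hne rfl
  have hΦ0 : ∀ i, Φ (0 : Fin d → ℝ) i = ∏ j ∈ S, x i j := by
    intro i
    rw [hΦ_def]
    refine Finset.prod_congr rfl fun j hj => ?_
    simp only [Pi.zero_apply, sub_zero]
    exact max_eq_left (hx01 i j).1
  set T : Finset (Fin d → ℝ) := T₀.filter (· ∈ tcSupport d S) with hT_def
  set D : ℝ := if (0 : Fin d → ℝ) ∈ T₀ then w (Φ 0) else 0 with hD_def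
  have hTsub : T ⊆ T₀ := Finset.filter_subset _ _
  have hmem_sdiff : ∀ p ∈ T₀ \ T, p ∈ T₀ ∧ p ∉ tcSupport d S := by
    intro p hp
    obtain ⟨h1, h2⟩ := Finset.mem_sdiff.mp hp
    exact ⟨h1, fun hs => h2 (Finset.mem_filter.mpr ⟨h1, hs⟩)⟩
  have hsplit : ∀ i, v i = (∑ p ∈ T, w (Φ p) * Φ p i) + D * ∏ j ∈ S, x i j := by
    intro i
    have h1 : v i = ∑ p ∈ T₀, w (Φ p) * Φ p i := by
      rw [hsum0, Finset.sum_apply]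
      simp [smul_eq_mul]
    rw [h1, ← Finset.sum_sdiff hTsub]
    have hbadsum : ∑ p ∈ T₀ \ T, w (Φ p) * Φ p i = D * ∏ j ∈ S, x i j := by
      by_cases h0 : (0 : Fin d → ℝ) ∈ T₀
      · have h0sd : (0 : Fin d → ℝ) ∈ T₀ \ T := Finset.mem_sdiff.mpr
          ⟨h0, fun hT => h0S (Finset.mem_filter.mp hT).2⟩
        rw [hD_def, if_pos h0, ← hΦ0 i]
        refine Finset.sum_eq_single_of_mem 0 h0sd ?_
        intro p hp hpne
        obtain ⟨hpT₀, hpns⟩ := hmem_sdiff p hp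
        rcases hbad p hpT₀ hpns with rfl | hΦp
        · exact absurd rfl hpne
        · rw [hΦp]; simp
      · rw [hD_def, if_neg h0, zero_mul]
        refine Finset.sum_eq_zero fun p hp => ?_
        obtain ⟨hpT₀, hpns⟩ := hmem_sdiff p hp
        rcases hbad p hpT₀ hpns with rfl | hΦp
        · exact absurd hpT₀ h0
        · rw [hΦp]; simp
    rw [hbadsum]
    ring
  -- relation to the integral against ν
  have hνint : ∀ i, ∫ t, Φ t i ∂ν = c.toReal * v i := by
    intro i
    have hproj : ∫ t, Φ t i ∂μ' = v i := by
      have := (ContinuousLinearMap.proj (R := ℝ) (φ := fun _ : Fin n => ℝ) i).integral_comp_comm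
        hInt'
      simpa using this
    have hsmul : ∫ t, Φ t i ∂μ' = (c⁻¹).toReal * (∫ t, Φ t i ∂ν) := by
      rw [hμ'_def, integral_smul_measure, smul_eq_mul]
    have hcR : c.toReal ≠ 0 := ENNReal.toReal_ne_zero.mpr ⟨hc0, hcT⟩
    have hinv : (c⁻¹).toReal = (c.toReal)⁻¹ := ENNReal.toReal_inv c
    rw [hsmul, hinv] at hproj
    field_simp at hproj ⊢
    linarith [hproj]
  set cf : (Fin d → ℝ) → ENNReal := fun p => ENNReal.ofReal (c.toReal * w (Φ p)) with hcf_def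
  refine ⟨T, cf, c.toReal * D, ?_, ?_, ?_, ?_⟩
  · -- InLattice
    intro t ht
    obtain ⟨htT₀, hts⟩ := Finset.mem_filter.mp ht
    obtain ⟨htG, ht0⟩ := hPfacts t (hT₀P t htT₀)
    refine ⟨?_, hts.2, ht0⟩
    intro j hj
    rcases Finset.mem_insert.mp (htG j hj) with h | h
    · exact Or.inl h
    · obtain ⟨i, _, hi⟩ := Finset.mem_image.mp h
      exact Or.inr ⟨i, hi.symm⟩
  · intro t ht
    exact (Finset.mem_filter.mp ht).2
  · intro t _
    exact ENNReal.ofReal_ne_top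
  · intro i
    have hdint : ∀ p : Fin d → ℝ, Integrable (fun t => Φ t i) (cf p • Measure.dirac p) := by
      intro p
      refine Integrable.smul_measure ?_ ENNReal.ofReal_ne_top
      exact (integrable_const (Φ p i)).congr (ae_eq_dirac fun t => Φ t i).symm
    have hdisc : ∫ t, Φ t i ∂(∑ t ∈ T, cf t • Measure.dirac t)
        = ∑ p ∈ T, (c.toReal * w (Φ p)) * Φ p i := by
      rw [integral_finset_sum_measure fun p _ => hdint p]
      refine Finset.sum_congr rfl fun p hp => ?_
      rw [integral_smul_measure, integral_dirac, hcf_def,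
        ENNReal.toReal_ofReal
          (mul_nonneg ENNReal.toReal_nonneg (hT₀w p (Finset.mem_filter.mp hp).1)),
        smul_eq_mul]
    have hfinal : ∫ t, Φ t i ∂(∑ t ∈ T, cf t • Measure.dirac t)
        = (∫ t, Φ t i ∂ν) - (c.toReal * D) * ∏ j ∈ S, x i j := by
      rw [hdisc, hνint i, hsplit i, mul_add, Finset.mul_sum]
      have hc : ∑ p ∈ T, c.toReal * (w (Φ p) * Φ p i)
          = ∑ p ∈ T, c.toReal * w (Φ p) * Φ p i :=
        Finset.sum_congr rfl fun p _ => by ring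
      rw [hc]; ring
    simpa only [hΦ_def] using hfinal

end AuxDiscretize

/-- **Lemma (reduction to discrete measures).**
For any representation `(β₀,(β_S),(ν_S))` of a function in `F^{d,s}_TC` there is another
representation `(γ₀,(γ_S),(μ_S))` whose measures are discrete and supported on the
lattices `L_S` generated by the design points, and whose associated function agrees with
the original one at all design points. -/
theorem reduction_to_discrete_measures (d s n : ℕ) (hs1 : 1 ≤ s) (hsd : s ≤ d)
    (x : Fin n → Fin d → ℝ) (hx : ∀ i, x i ∈ unitCube (Fin d))
    (r : TCRep d) :
    ∃ r' : TCRep d,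
      (∀ S ∈ smallSets d s, ∃ (T : Finset (Fin d → ℝ)) (c : (Fin d → ℝ) → ENNReal),
        (∀ t ∈ T, InLattice x S t) ∧
        r'.ν S = ∑ t ∈ T, c t • MeasureTheory.Measure.dirac t) ∧
      ∀ i, r'.toFun s (x i) = r.toFun s (x i) := by
  classical
  have key : ∀ S : Finset (Fin d),
      ∃ (T : Finset (Fin d → ℝ)) (cf : (Fin d → ℝ) → ENNReal) (δ : ℝ),
      (∀ t ∈ T, InLattice x S t) ∧ (∀ t ∈ T, t ∈ tcSupport d S) ∧ (∀ t ∈ T, cf t ≠ ⊤) ∧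
      ∀ i, ∫ t, (∏ j ∈ S, max (x i j - t j) 0) ∂(∑ t ∈ T, cf t • Measure.dirac t)
          = (∫ t, (∏ j ∈ S, max (x i j - t j) 0) ∂(r.ν S)) - δ * ∏ j ∈ S, x i j := by
    intro S
    haveI := r.finite S
    exact key_discretize x hx (r.ν S) S (r.support S)
  choose T cf δ hLat hSupp hTop hInt using key
  refine ⟨{ β0 := r.β0,
            β := fun S => if S ∈ smallSets d s then r.β S - δ S else r.β S,
            ν := fun S => if S ∈ smallSets d s then ∑ t ∈ T S, cf S t • Measure.dirac t else 0,
            finite := ?_, support := ?_ }, ?_, ?_⟩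
  · intro S
    by_cases hS : S ∈ smallSets d s
    · simp only [if_pos hS]
      constructor
      rw [Measure.finset_sum_apply]
      refine ENNReal.sum_lt_top.mpr fun t ht => ?_
      rw [Measure.smul_apply, measure_univ, smul_eq_mul, mul_one]
      exact lt_top_iff_ne_top.mpr (hTop S t ht)
    · simp only [if_neg hS]
      infer_instance
  · intro S
    by_cases hS : S ∈ smallSets d s
    · simp only [if_pos hS]
      rw [Measure.finset_sum_apply]
      refine Finset.sum_eq_zero fun t ht => ?_
      rw [Measure.smul_apply,
        Measure.dirac_apply' t (measurableSet_tcSupport d S).compl,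
        Set.indicator_of_notMem (Set.notMem_compl_iff.mpr (hSupp S t ht)), smul_zero]
    · simp only [if_neg hS]
      simp
  · intro S hS
    exact ⟨T S, cf S, hLat S, by simp only [if_pos hS]⟩
  · intro i
    simp only [TCRep.toFun]
    have h1 : ∀ S ∈ smallSets d s,
        (if S ∈ smallSets d s then r.β S - δ S else r.β S) * ∏ j ∈ S, x i j
          = r.β S * ∏ j ∈ S, x i j - δ S * ∏ j ∈ S, x i j := by
      intro S hS
      rw [if_pos hS]; ring
    have h2 : ∀ S ∈ smallSets d s,
        (∫ t, (∏ j ∈ S, max (x i j - t j) 0)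
            ∂(if S ∈ smallSets d s then ∑ t ∈ T S, cf S t • Measure.dirac t else 0))
          = (∫ t, (∏ j ∈ S, max (x i j - t j) 0) ∂(r.ν S)) - δ S * ∏ j ∈ S, x i j := by
      intro S hS
      rw [if_pos hS]
      exact hInt S i
    rw [Finset.sum_congr rfl h1, Finset.sum_congr rfl h2,
      Finset.sum_sub_distrib, Finset.sum_sub_distrib]
    ring

end
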